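/- Let A and B be unital C*-algebras and T, T₀ : A → B surjective real-linear isometries. Assume T₀ is a real-linear Jordan *-isomorphism (T₀(x ∘ y) = T₀(x) ∘ T₀(y) and T₀(x*) = T₀(x)* where x ∘ y = (xy + yx)/2), T is real-linear, T(1) = T₀(1) = 1, both T and T₀ preserve the Jordan triple product {x,y,z} = (x y* z + z y* x)/2, and T₀(u) x T₀(u) = T(u) x T(u) for every x ∈ B and every unitary u in the principal component 𝒰⁰(A). Then T = T₀. -/

import Mathlib

open NormedSpace Complex

private lemma half_add' {M : Type*} [AddCommGroup M] [Module ℝ M] (y : M) :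
    (1 / 2 : ℝ) • (y + y) = y := by
  rw [← two_smul ℝ y, smul_smul]; norm_num

private lemma star_real_smul' {A : Type*} [AddCommGroup A] [StarAddMonoid A]
    [Module ℝ A] [Module ℂ A] [IsScalarTower ℝ ℂ A] [StarModule ℂ A]
    (t : ℝ) (x : A) : star (t • x) = t • star x := by
  rw [show t • x = (t : ℂ) • x from (algebraMap_smul ℂ t x).symm, star_smul,
    show t • star x = (t : ℂ) • star x from (algebraMap_smul ℂ t (star x)).symm]
  congr 1
  simp [Complex.star_def, Complex.conj_ofReal]

private lemma symm_near_one' {B : Type*} [NormedRing B] [StarRing B] [CStarRing B]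
    [NormedAlgebra ℝ B] {s : B} (hsa : star s = s) (hsq : s * s = 1)
    (h : ‖s - 1‖ < 2) : s = 1 := by
  have hmul : (s - 1) * (s - 1) = (2 : ℝ) • (1 - s) := by
    have h1 : (s - 1) * (s - 1) = s * s - s - s + 1 := by noncomm_ring
    rw [h1, hsq, two_smul]; abel
  have hstar : star (s - 1) = s - 1 := by rw [star_sub, star_one, hsa]
  have hcs : ‖s - 1‖ * ‖s - 1‖ = 2 * ‖s - 1‖ := by
    have h1 : ‖star (s - 1) * (s - 1)‖ = ‖s - 1‖ * ‖s - 1‖ :=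
      CStarRing.norm_star_mul_self
    rw [hstar, hmul, norm_smul] at h1
    rw [← h1, norm_sub_rev]
    norm_num
  have h0 : ‖s - 1‖ = 0 := by nlinarith [norm_nonneg (s - 1)]
  have := norm_eq_zero.mp h0
  rw [sub_eq_zero] at this
  exact this


private lemma keyfacts' {A B : Type*}
    [NormedRing A] [StarRing A] [CStarRing A] [NormedAlgebra ℂ A]
    [StarModule ℂ A] [CompleteSpace A]
    [NormedRing B] [StarRing B] [CStarRing B] [NormedAlgebra ℂ B]
    [StarModule ℂ B] [CompleteSpace B]
    (T T₀ : A →ₗ[ℝ] B)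
    (hT₀jordan : ∀ x y : A,
      T₀ ((1 / 2 : ℝ) • (x * y + y * x)) =
        (1 / 2 : ℝ) • (T₀ x * T₀ y + T₀ y * T₀ x))
    (hT₀star : ∀ x : A, T₀ (star x) = star (T₀ x))
    (hT₀1 : T₀ 1 = 1)
    (hTtriple : ∀ x y z : A,
      T ((1 / 2 : ℝ) • (x * star y * z + z * star y * x)) =
        (1 / 2 : ℝ) • (T x * star (T y) * T z + T z * star (T y) * T x))
    (hT₀triple : ∀ x y z : A,
      T₀ ((1 / 2 : ℝ) • (x * star y * z + z * star y * x)) =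
        (1 / 2 : ℝ) • (T₀ x * star (T₀ y) * T₀ z + T₀ z * star (T₀ y) * T₀ x))
    {u : A} (hu : u ∈ unitary A)
    (hUu : ∀ x : B, T₀ u * x * T₀ u = T u * x * T u) :
    star (star (T₀ u) * T u) = star (T₀ u) * T u ∧
    (star (T₀ u) * T u) * (star (T₀ u) * T u) = 1 ∧
    (star (T₀ u) * T u = 1 → T u = T₀ u) := by
  obtain ⟨hu1, hu2⟩ := Unitary.mem_iff.mp hu
  set v := T₀ u with hv
  set w := T u with hw
  have hv3 : v * star v * v = v := by
    have h := hT₀triple u u u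
    rw [hu2, one_mul, half_add', half_add'] at h
    exact h.symm
  have hw3 : w * star w * w = w := by
    have h := hTtriple u u u
    rw [hu2, one_mul, half_add', half_add'] at h
    exact h.symm
  have hvv : v * star v + star v * v = 2 := by
    have h := hT₀jordan u (star u)
    rw [hu2, hu1, half_add', hT₀1, hT₀star] at h
    calc v * star v + star v * v
        = (2 : ℝ) • ((1 / 2 : ℝ) • (v * star v + star v * v)) := by
          rw [smul_smul]; norm_num
      _ = (2 : ℝ) • (1 : B) := by rw [← h]
      _ = 2 := by rw [two_smul]; exact one_add_one_eq_two
  have hq : (star v * v) * (star v * v) = star v * v := by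
    calc (star v * v) * (star v * v) = star v * (v * star v * v) := by noncomm_ring
      _ = star v * v := by rw [hv3]
  have hp : (v * star v) * (v * star v) = v * star v := by
    calc (v * star v) * (v * star v) = (v * star v * v) * star v := by noncomm_ring
      _ = v * star v := by rw [hv3]
  have hq1 : star v * v = 1 := by
    have hpv : v * star v = 2 - star v * v := eq_sub_of_add_eq hvv
    have e : (2 : B) - 2 * (star v * v) =
        (v * star v) * (v * star v) - (v * star v) -
          ((star v * v) * (star v * v) - star v * v) := by
      rw [hpv]; noncomm_ring
    rw [hp, hq] at e
    have e0 : (2 : B) - 2 * (star v * v) = 0 := by rw [e]; abel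
    have e1 : ((1 : B) - star v * v) + ((1 : B) - star v * v) = 0 := by
      have : ((1 : B) - star v * v) + ((1 : B) - star v * v)
          = (2 : B) - 2 * (star v * v) := by
            rw [two_mul, ← one_add_one_eq_two]; abel
      rw [this, e0]
    have e2 := congrArg (fun z => (1 / 2 : ℝ) • z) e1
    simp only [half_add', smul_zero] at e2
    rw [sub_eq_zero] at e2
    exact e2.symm
  have hp1 : v * star v = 1 := by
    rw [eq_sub_of_add_eq hvv, hq1]
    norm_num
  have hA : v = w * star v * w := by
    have h := hUu (star v)
    rw [show v * star v * v = v from by rw [hp1, one_mul]] at h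
    exact h
  have hr2 : (star v * w * star v) * w = 1 := by
    calc (star v * w * star v) * w = star v * (w * star v * w) := by noncomm_ring
      _ = star v * v := by rw [← hA]
      _ = 1 := hq1
  have hr1 : w * (star v * w * star v) = 1 := by
    calc w * (star v * w * star v) = (w * star v * w) * star v := by noncomm_ring
      _ = v * star v := by rw [← hA]
      _ = 1 := hp1
  have hww1 : star w * w = 1 := by
    have h : (star v * w * star v) * (w * star w * w) = star w * w := by
      calc (star v * w * star v) * (w * star w * w)
          = ((star v * w * star v) * w) * (star w * w) := by noncomm_ring
        _ = star w * w := by rw [hr2, one_mul]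
    rw [hw3, hr2] at h
    exact h.symm
  refine ⟨?_, ?_, ?_⟩
  · rw [star_mul, star_star]
    calc star w * v = star w * (w * star v * w) := by rw [← hA]
      _ = (star w * w) * (star v * w) := by noncomm_ring
      _ = star v * w := by rw [hww1, one_mul]
  · calc (star v * w) * (star v * w) = star v * (w * star v * w) := by noncomm_ring
      _ = star v * v := by rw [← hA]
      _ = 1 := hq1
  · intro hs1
    have h : v * (star v * w) = w := by
      calc v * (star v * w) = (v * star v) * w := by noncomm_ring
        _ = w := by rw [hp1, one_mul]
    rw [hs1, mul_one] at h
    exact h.symm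


/-- Let `T, T₀ : A → B` be surjective unital real-linear isometries between unital
C*-algebras which preserve the Jordan triple product, with `T₀` a real-linear
Jordan *-isomorphism. If `U_{T₀(u)} = U_{T(u)}` on `B` for every unitary `u` in the
principal component of the unitary group of `A`, then `T = T₀`. -/
theorem stmt_16 {A B : Type*}
    [NormedRing A] [StarRing A] [CStarRing A] [NormedAlgebra ℂ A]
    [StarModule ℂ A] [CompleteSpace A]
    [NormedRing B] [StarRing B] [CStarRing B] [NormedAlgebra ℂ B]
    [StarModule ℂ B] [CompleteSpace B]
    (T T₀ : A →ₗ[ℝ] B)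
    (hTsurj : Function.Surjective T) (hT₀surj : Function.Surjective T₀)
    (hTiso : ∀ x : A, ‖T x‖ = ‖x‖) (hT₀iso : ∀ x : A, ‖T₀ x‖ = ‖x‖)
    (hT₀jordan : ∀ x y : A,
      T₀ ((1 / 2 : ℝ) • (x * y + y * x)) =
        (1 / 2 : ℝ) • (T₀ x * T₀ y + T₀ y * T₀ x))
    (hT₀star : ∀ x : A, T₀ (star x) = star (T₀ x))
    (hT1 : T 1 = 1) (hT₀1 : T₀ 1 = 1)
    (hTtriple : ∀ x y z : A,
      T ((1 / 2 : ℝ) • (x * star y * z + z * star y * x)) =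
        (1 / 2 : ℝ) • (T x * star (T y) * T z + T z * star (T y) * T x))
    (hT₀triple : ∀ x y z : A,
      T₀ ((1 / 2 : ℝ) • (x * star y * z + z * star y * x)) =
        (1 / 2 : ℝ) • (T₀ x * star (T₀ y) * T₀ z + T₀ z * star (T₀ y) * T₀ x))
    (hU : ∀ u ∈ connectedComponentIn (unitary A : Set A) 1,
      ∀ x : B, T₀ u * x * T₀ u = T u * x * T u) :
    T = T₀ := by
  have hTb : ∀ x : A, ‖T x‖ ≤ 1 * ‖x‖ := fun x => by rw [hTiso, one_mul]
  have hT₀b : ∀ x : A, ‖T₀ x‖ ≤ 1 * ‖x‖ := fun x => by rw [hT₀iso, one_mul]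
  let Tc : A →L[ℝ] B := T.mkContinuous 1 hTb
  let T₀c : A →L[ℝ] B := T₀.mkContinuous 1 hT₀b
  have hTca : ∀ x, Tc x = T x := fun x => rfl
  have hT₀ca : ∀ x, T₀c x = T₀ x := fun x => rfl
  set S : Set A := connectedComponentIn (unitary A : Set A) 1 with hSdef
  -- the connectedness step
  have key : ∀ u ∈ S, T u = T₀ u := by
    have hfacts : ∀ u ∈ S,
        star (star (T₀ u) * T u) = star (T₀ u) * T u ∧
        (star (T₀ u) * T u) * (star (T₀ u) * T u) = 1 ∧
        (star (T₀ u) * T u = 1 → T u = T₀ u) := by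
      intro u huS
      exact keyfacts' T T₀ hT₀jordan hT₀star hT₀1 hTtriple hT₀triple
        (SetLike.mem_coe.mp (connectedComponentIn_subset _ _ huS)) (hU u huS)
    have hGcont : Continuous fun x : A => star (T₀c x) * Tc x :=
      (continuous_star.comp T₀c.continuous).mul Tc.continuous
    haveI : PreconnectedSpace S := Subtype.preconnectedSpace isPreconnected_connectedComponentIn
    have h1mem : (1 : A) ∈ S := mem_connectedComponentIn (SetLike.mem_coe.mpr (one_mem _))
    set E : Set S := {x : S | star (T₀c (x : A)) * Tc (x : A) = 1} with hEdef
    have hEclosed : IsClosed E :=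
      isClosed_eq (hGcont.comp continuous_subtype_val) continuous_const
    have hEeq : E = {x : S | ‖star (T₀c (x : A)) * Tc (x : A) - 1‖ < 2} := by
      ext x
      simp only [hEdef, Set.mem_setOf_eq]
      constructor
      · intro h; rw [h, sub_self, norm_zero]; norm_num
      · intro h
        obtain ⟨hsa, hsq, -⟩ := hfacts x.val x.prop
        exact symm_near_one' hsa hsq h
    have hEopen : IsOpen E := by
      rw [hEeq]
      exact isOpen_lt (((hGcont.comp continuous_subtype_val).sub continuous_const).norm)
        continuous_const
    have hEuniv : E = Set.univ := by
      apply IsClopen.eq_univ ⟨hEclosed, hEopen⟩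
      refine ⟨⟨1, h1mem⟩, ?_⟩
      show star (T₀c (1 : A)) * Tc (1 : A) = 1
      rw [hTca, hT₀ca, hT1, hT₀1, star_one, one_mul]
    intro u huS
    have hmemE : (⟨u, huS⟩ : S) ∈ E := by rw [hEuniv]; trivial
    exact (hfacts u huS).2.2 hmemE
  -- the derivative step
  let D : A →L[ℝ] B := Tc - T₀c
  have hDapp : ∀ x, D x = T x - T₀ x := fun x => rfl
  have hDsq : ∀ a : A, IsSelfAdjoint a → D (a * a) = 0 ∧ D (I • a) = 0 := by
    intro a ha
    set c : A := I • a with hc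
    have hcskew : ∀ t : ℝ, t • c ∈ skewAdjoint A := by
      intro t
      rw [skewAdjoint.mem_iff, hc, star_real_smul', star_smul, ha.star_eq,
        show star (I : ℂ) = -I by simp [Complex.star_def, Complex.conj_I],
        neg_smul, smul_neg]
    letI : NormedAlgebra ℚ A := NormedAlgebra.restrictScalars ℚ ℂ A
    have hmem : ∀ t : ℝ, NormedSpace.exp (t • c) ∈ S := by
      intro t
      have hcont : Continuous fun r : ℝ => NormedSpace.exp (r • c) :=
        exp_continuous.comp (continuous_id.smul continuous_const)
      have himg : IsPreconnected (Set.range fun r : ℝ => NormedSpace.exp (r • c)) := by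
        rw [← Set.image_univ]
        exact isPreconnected_univ.image _ hcont.continuousOn
      have hsubset : (Set.range fun r : ℝ => NormedSpace.exp (r • c)) ⊆ (unitary A : Set A) := by
        rintro _ ⟨r, rfl⟩
        exact exp_mem_unitary_of_mem_skewAdjoint (hcskew r)
      have h1r : (1 : A) ∈ Set.range fun r : ℝ => NormedSpace.exp (r • c) :=
        ⟨0, by simp [NormedSpace.exp_zero]⟩
      exact (himg.subset_connectedComponentIn h1r hsubset) ⟨t, rfl⟩
    have hzero : ∀ t : ℝ, D (NormedSpace.exp (t • c)) = 0 := by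
      intro t
      rw [hDapp, key _ (hmem t), sub_self]
    have hder1 : ∀ t : ℝ, D (c * NormedSpace.exp (t • c)) = 0 := by
      intro t
      have h1 : HasDerivAt (fun r : ℝ => D (NormedSpace.exp (r • c))) (D (c * NormedSpace.exp (t • c))) t :=
        D.hasFDerivAt.comp_hasDerivAt t (hasDerivAt_exp_smul_const' (𝕂 := ℝ) c t)
      have h2 : HasDerivAt (fun r : ℝ => D (NormedSpace.exp (r • c))) 0 t :=
        (hasDerivAt_const t (0 : B)).congr_of_eventuallyEq
          (Filter.Eventually.of_forall fun r => hzero r)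
      exact h1.unique h2
    have hder2 : D (c * (c * NormedSpace.exp ((0 : ℝ) • c))) = 0 := by
      have h1 : HasDerivAt (fun r : ℝ => D (c * NormedSpace.exp (r • c)))
          (D (c * (c * NormedSpace.exp ((0 : ℝ) • c)))) 0 :=
        (D.comp ((ContinuousLinearMap.mul ℝ A) c)).hasFDerivAt.comp_hasDerivAt 0
          (hasDerivAt_exp_smul_const' (𝕂 := ℝ) c 0)
      have h2 : HasDerivAt (fun r : ℝ => D (c * NormedSpace.exp (r • c))) 0 0 :=
        (hasDerivAt_const 0 (0 : B)).congr_of_eventuallyEq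
          (Filter.Eventually.of_forall fun r => hder1 r)
      exact h1.unique h2
    have hexp0 : NormedSpace.exp ((0 : ℝ) • c) = (1 : A) := by rw [zero_smul, NormedSpace.exp_zero]
    have hDc : D c = 0 := by have h := hder1 0; rwa [hexp0, mul_one] at h
    have hDcc : D (c * c) = 0 := by rw [hexp0, mul_one] at hder2; exact hder2
    have hcc : c * c = -(a * a) := by
      rw [hc, smul_mul_assoc, mul_smul_comm, smul_smul, Complex.I_mul_I, neg_one_smul]
    rw [hcc, map_neg, neg_eq_zero] at hDcc
    exact ⟨hDcc, hDc⟩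
  have hD1 : D (1 : A) = 0 := by rw [hDapp, hT1, hT₀1, sub_self]
  have hDsa : ∀ x : A, IsSelfAdjoint x → D x = 0 := by
    intro x hx
    have h1 : D ((x + 1) * (x + 1)) = 0 := (hDsq (x + 1) (hx.add (IsSelfAdjoint.one A))).1
    have h2 : D (x * x) = 0 := (hDsq x hx).1
    have hxx : x + x = (x + 1) * (x + 1) - x * x - 1 := by noncomm_ring
    have hsum : D (x + x) = 0 := by
      rw [hxx, map_sub, map_sub, h1, h2, hD1, sub_zero, sub_zero]
    calc D x = D ((1 / 2 : ℝ) • (x + x)) := by rw [half_add']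
      _ = (1 / 2 : ℝ) • D (x + x) := map_smul D _ _
      _ = 0 := by rw [hsum, smul_zero]
  have hfin : ∀ y : A, D y = 0 := by
    intro y
    have hha : IsSelfAdjoint ((1 / 2 : ℝ) • (y + star y)) := by
      rw [IsSelfAdjoint, star_real_smul', star_add, star_star, add_comm]
    have hza : star ((1 / 2 : ℝ) • (y - star y)) = -((1 / 2 : ℝ) • (y - star y)) := by
      rw [star_real_smul', star_sub, star_star, ← smul_neg, neg_sub]
    have hka : IsSelfAdjoint ((-I : ℂ) • ((1 / 2 : ℝ) • (y - star y))) := by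
      rw [IsSelfAdjoint, star_smul, hza, smul_neg,
        show star (-I : ℂ) = I by simp [Complex.star_def, Complex.conj_I], neg_smul]
    have hIk : I • ((-I : ℂ) • ((1 / 2 : ℝ) • (y - star y)))
        = (1 / 2 : ℝ) • (y - star y) := by
      rw [smul_smul, mul_neg, Complex.I_mul_I, neg_neg, one_smul]
    have hsum : (1 / 2 : ℝ) • (y + star y)
        + I • ((-I : ℂ) • ((1 / 2 : ℝ) • (y - star y))) = y := by
      rw [hIk, ← smul_add, show y + star y + (y - star y) = y + y from by abel, half_add']
    calc D y = D ((1 / 2 : ℝ) • (y + star y))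
          + D (I • ((-I : ℂ) • ((1 / 2 : ℝ) • (y - star y)))) := by rw [← map_add, hsum]
      _ = 0 := by rw [hDsa _ hha, (hDsq _ hka).2, add_zero]
  ext x
  have hx := hfin x
  rw [hDapp] at hx
  exact sub_eq_zero.mp hx
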